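/- If {u,v,w} and {u',v',w'} are positively oriented orthonormal bases of the same oriented 3-plane in ℝ^8, then X(u,v,w) = X(u',v',w'), where X is the octonionic triple cross product. Hence σ₃(u ∧ v ∧ w) = X(u,v,w) is a well-defined unit vector orthogonal to span{u,v,w}. -/

import Mathlib

open scoped RealInnerProductSpace

noncomputable section

abbrev Oct : Type := EuclideanSpace ℝ (Fin 8)

def octe (i : Fin 8) : Oct := EuclideanSpace.single i 1

def plusTriples : List (Fin 8 × Fin 8 × Fin 8) :=
  [(1,2,3),(1,4,5),(1,7,6),(2,4,6),(2,5,7),(3,4,7),(3,6,5)]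

/-- Completely skew-symmetric structure tensor taking the value `+1` on the
triples 123, 145, 176, 246, 257, 347, 365. -/
def eps (i j k : Fin 8) : ℝ :=
  if plusTriples.any (fun t => decide ((i,j,k) = t ∨ (i,j,k) = (t.2.1, t.2.2, t.1) ∨
      (i,j,k) = (t.2.2, t.1, t.2.1))) then 1
  else if plusTriples.any (fun t => decide ((i,j,k) = (t.1, t.2.2, t.2.1) ∨
      (i,j,k) = (t.2.2, t.2.1, t.1) ∨ (i,j,k) = (t.2.1, t.1, t.2.2))) then -1
  else 0

/-- Structure constants of octonion multiplication:
`e_0 e_i = e_i e_0 = e_i` and `e_i e_j = -δ_ij e_0 + ε_ijk e_k` for `i,j ≥ 1`. -/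
def structC (i j k : Fin 8) : ℝ :=
  if i = 0 then (if j = k then 1 else 0)
  else if j = 0 then (if i = k then 1 else 0)
  else (if i = j ∧ k = 0 then (-1:ℝ) else 0) + eps i j k

/-- Octonion multiplication on ℝ⁸. -/
def octMul (x y : Oct) : Oct := WithLp.toLp 2 (fun k => ∑ i, ∑ j, x i * y j * structC i j k)

/-- Octonionic conjugation. -/
def octConj (x : Oct) : Oct := WithLp.toLp 2 (fun k => if k = 0 then x 0 else -(x k))

/-- The triple cross product `X(u,v,w) = -u(v̄w) + ⟨u,v⟩w + ⟨v,w⟩u - ⟨w,u⟩v`. -/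
def X3 (u v w : Oct) : Oct :=
  -octMul u (octMul (octConj v) w) + ⟪u, v⟫ • w + ⟪v, w⟫ • u - ⟪w, u⟫ • v

/-- The double cross product `u × v = uv + ⟨u,v⟩ e_0` (on imaginary octonions). -/
def cross2 (u v : Oct) : Oct := octMul u v + ⟪u, v⟫ • octe 0


def epsZ (i j k : Fin 8) : ℤ :=
  if plusTriples.any (fun t => decide ((i,j,k) = t ∨ (i,j,k) = (t.2.1, t.2.2, t.1) ∨
      (i,j,k) = (t.2.2, t.1, t.2.1))) then 1
  else if plusTriples.any (fun t => decide ((i,j,k) = (t.1, t.2.2, t.2.1) ∨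
      (i,j,k) = (t.2.2, t.2.1, t.1) ∨ (i,j,k) = (t.2.1, t.1, t.2.2))) then -1
  else 0
def structZ (i j k : Fin 8) : ℤ :=
  if i = 0 then (if j = k then 1 else 0)
  else if j = 0 then (if i = k then 1 else 0)
  else (if i = j ∧ k = 0 then (-1:ℤ) else 0) + epsZ i j k
def sZ (a : Fin 8) : ℤ := if a = 0 then 1 else -1
def dZ (i j : Fin 8) : ℤ := if i = j then 1 else 0

def structT : Fin 8 → Fin 8 → Fin 8 → ℤ := ![
  ![
    ![1, 0, 0, 0, 0, 0, 0, 0],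
    ![0, 1, 0, 0, 0, 0, 0, 0],
    ![0, 0, 1, 0, 0, 0, 0, 0],
    ![0, 0, 0, 1, 0, 0, 0, 0],
    ![0, 0, 0, 0, 1, 0, 0, 0],
    ![0, 0, 0, 0, 0, 1, 0, 0],
    ![0, 0, 0, 0, 0, 0, 1, 0],
    ![0, 0, 0, 0, 0, 0, 0, 1]],
  ![
    ![0, 1, 0, 0, 0, 0, 0, 0],
    ![-1, 0, 0, 0, 0, 0, 0, 0],
    ![0, 0, 0, 1, 0, 0, 0, 0],
    ![0, 0, -1, 0, 0, 0, 0, 0],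
    ![0, 0, 0, 0, 0, 1, 0, 0],
    ![0, 0, 0, 0, -1, 0, 0, 0],
    ![0, 0, 0, 0, 0, 0, 0, -1],
    ![0, 0, 0, 0, 0, 0, 1, 0]],
  ![
    ![0, 0, 1, 0, 0, 0, 0, 0],
    ![0, 0, 0, -1, 0, 0, 0, 0],
    ![-1, 0, 0, 0, 0, 0, 0, 0],
    ![0, 1, 0, 0, 0, 0, 0, 0],
    ![0, 0, 0, 0, 0, 0, 1, 0],
    ![0, 0, 0, 0, 0, 0, 0, 1],
    ![0, 0, 0, 0, -1, 0, 0, 0],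
    ![0, 0, 0, 0, 0, -1, 0, 0]],
  ![
    ![0, 0, 0, 1, 0, 0, 0, 0],
    ![0, 0, 1, 0, 0, 0, 0, 0],
    ![0, -1, 0, 0, 0, 0, 0, 0],
    ![-1, 0, 0, 0, 0, 0, 0, 0],
    ![0, 0, 0, 0, 0, 0, 0, 1],
    ![0, 0, 0, 0, 0, 0, -1, 0],
    ![0, 0, 0, 0, 0, 1, 0, 0],
    ![0, 0, 0, 0, -1, 0, 0, 0]],
  ![
    ![0, 0, 0, 0, 1, 0, 0, 0],
    ![0, 0, 0, 0, 0, -1, 0, 0],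
    ![0, 0, 0, 0, 0, 0, -1, 0],
    ![0, 0, 0, 0, 0, 0, 0, -1],
    ![-1, 0, 0, 0, 0, 0, 0, 0],
    ![0, 1, 0, 0, 0, 0, 0, 0],
    ![0, 0, 1, 0, 0, 0, 0, 0],
    ![0, 0, 0, 1, 0, 0, 0, 0]],
  ![
    ![0, 0, 0, 0, 0, 1, 0, 0],
    ![0, 0, 0, 0, 1, 0, 0, 0],
    ![0, 0, 0, 0, 0, 0, 0, -1],
    ![0, 0, 0, 0, 0, 0, 1, 0],
    ![0, -1, 0, 0, 0, 0, 0, 0],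
    ![-1, 0, 0, 0, 0, 0, 0, 0],
    ![0, 0, 0, -1, 0, 0, 0, 0],
    ![0, 0, 1, 0, 0, 0, 0, 0]],
  ![
    ![0, 0, 0, 0, 0, 0, 1, 0],
    ![0, 0, 0, 0, 0, 0, 0, 1],
    ![0, 0, 0, 0, 1, 0, 0, 0],
    ![0, 0, 0, 0, 0, -1, 0, 0],
    ![0, 0, -1, 0, 0, 0, 0, 0],
    ![0, 0, 0, 1, 0, 0, 0, 0],
    ![-1, 0, 0, 0, 0, 0, 0, 0],
    ![0, -1, 0, 0, 0, 0, 0, 0]],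
  ![
    ![0, 0, 0, 0, 0, 0, 0, 1],
    ![0, 0, 0, 0, 0, 0, -1, 0],
    ![0, 0, 0, 0, 0, 1, 0, 0],
    ![0, 0, 0, 0, 1, 0, 0, 0],
    ![0, 0, 0, -1, 0, 0, 0, 0],
    ![0, 0, -1, 0, 0, 0, 0, 0],
    ![0, 1, 0, 0, 0, 0, 0, 0],
    ![-1, 0, 0, 0, 0, 0, 0, 0]]]
set_option maxHeartbeats 1000000 in
theorem structZ_eq_T : ∀ i j k : Fin 8, structZ i j k = structT i j k := by decide
def DT (i a b m : Fin 8) : ℤ := sZ a * ∑ j, structT a b j * structT i j m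
set_option maxHeartbeats 4000000 in
theorem idA : ∀ i a b m : Fin 8, DT i a b m + DT a i b m = 2 * dZ i a * dZ b m := by decide
set_option maxHeartbeats 4000000 in
theorem idW : ∀ i a b m : Fin 8, DT i a b m + DT i a m b = 2 * dZ i a * dZ b m := by decide
set_option maxHeartbeats 4000000 in
theorem idU : ∀ i a b m : Fin 8, DT i a b m + DT m a b i = 2 * dZ a b * dZ i m := by decide
set_option maxHeartbeats 4000000 in
theorem idV : ∀ i a b m : Fin 8, DT i a b m + DT i m b a
    = 2 * (dZ i a * dZ b m + dZ a b * dZ i m - dZ b i * dZ a m) := by decide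
set_option maxHeartbeats 4000000 in
theorem idN : ∀ i j a b : Fin 8, (∑ k, structT i j k * structT a b k)
    + (∑ k, structT i b k * structT a j k) = 2 * dZ i a * dZ j b := by decide
set_option maxHeartbeats 1000000 in
theorem idB : ∀ a b j : Fin 8, sZ a * structT a b j + sZ b * structT b a j
    = 2 * dZ a b * dZ j 0 := by decide
set_option maxHeartbeats 1000000 in
theorem idE : ∀ i k : Fin 8, structT i 0 k = dZ i k := by decide

-- real-valued versions
def sR (a : Fin 8) : ℝ := if a = 0 then 1 else -1
def dR (i j : Fin 8) : ℝ := if i = j then 1 else 0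
def DR (i a b m : Fin 8) : ℝ := sR a * ∑ j, structC a b j * structC i j m

lemma eps_cast (i j k : Fin 8) : eps i j k = (epsZ i j k : ℝ) := by
  unfold eps epsZ; split_ifs <;> norm_num
lemma structC_cast (i j k : Fin 8) : structC i j k = (structT i j k : ℝ) := by
  rw [← structZ_eq_T]; unfold structC structZ; rw [eps_cast]; split_ifs <;> push_cast <;> ring
lemma sR_cast (a : Fin 8) : sR a = (sZ a : ℝ) := by unfold sR sZ; split_ifs <;> norm_num
lemma dR_cast (i j : Fin 8) : dR i j = (dZ i j : ℝ) := by unfold dR dZ; split_ifs <;> norm_num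
lemma DR_cast (i a b m : Fin 8) : DR i a b m = (DT i a b m : ℝ) := by
  unfold DR DT; push_cast [structC_cast, sR_cast]; ring

lemma idA_R (i a b m : Fin 8) : DR i a b m + DR a i b m = 2 * dR i a * dR b m := by
  rw [DR_cast, DR_cast, dR_cast, dR_cast]; exact_mod_cast congrArg (Int.cast : ℤ → ℝ) (idA i a b m)
lemma idW_R (i a b m : Fin 8) : DR i a b m + DR i a m b = 2 * dR i a * dR b m := by
  rw [DR_cast, DR_cast, dR_cast, dR_cast]; exact_mod_cast congrArg (Int.cast : ℤ → ℝ) (idW i a b m)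
lemma idU_R (i a b m : Fin 8) : DR i a b m + DR m a b i = 2 * dR a b * dR i m := by
  rw [DR_cast, DR_cast, dR_cast, dR_cast]; exact_mod_cast congrArg (Int.cast : ℤ → ℝ) (idU i a b m)
lemma idV_R (i a b m : Fin 8) : DR i a b m + DR i m b a
    = 2 * (dR i a * dR b m + dR a b * dR i m - dR b i * dR a m) := by
  rw [DR_cast, DR_cast, dR_cast, dR_cast, dR_cast, dR_cast, dR_cast, dR_cast]
  exact_mod_cast congrArg (Int.cast : ℤ → ℝ) (idV i a b m)
lemma idN_R (i j a b : Fin 8) : (∑ k, structC i j k * structC a b k)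
    + (∑ k, structC i b k * structC a j k) = 2 * dR i a * dR j b := by
  simp only [structC_cast, dR_cast]
  exact_mod_cast congrArg (Int.cast : ℤ → ℝ) (idN i j a b)
lemma idB_R (a b j : Fin 8) : sR a * structC a b j + sR b * structC b a j
    = 2 * dR a b * dR j 0 := by
  simp only [structC_cast, sR_cast, dR_cast]
  exact_mod_cast congrArg (Int.cast : ℤ → ℝ) (idB a b j)
lemma idE_R (i k : Fin 8) : structC i 0 k = dR i k := by
  simp only [structC_cast, dR_cast]; exact_mod_cast congrArg (Int.cast : ℤ → ℝ) (idE i k)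

lemma inner_oct (x y : Oct) : ⟪x, y⟫ = ∑ i, x i * y i := by
  simp [PiLp.inner_apply, RCLike.inner_apply, conj_trivial]
  exact Finset.sum_congr rfl fun i _ => mul_comm _ _

lemma octConj_apply (v : Oct) (a : Fin 8) : octConj v a = sR a * v a := by
  unfold octConj sR; simp only [WithLp.ofLp_toLp]; split_ifs with h; · subst h; ring
  · ring

lemma octMul_apply (x y : Oct) (k : Fin 8) :
    octMul x y k = ∑ i, ∑ j, x i * y j * structC i j k := rfl

lemma sum_delta_right (w : Oct) (m : Fin 8) : (∑ b, w b * dR b m) = w m := by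
  simp [dR, mul_ite, Finset.sum_ite_eq']

lemma T_apply (u v w : Oct) (m : Fin 8) :
    octMul u (octMul (octConj v) w) m = ∑ i, ∑ a, ∑ b, u i * v a * w b * DR i a b m := by
  unfold DR
  simp only [octMul_apply, octConj_apply, Finset.sum_mul, Finset.mul_sum]
  refine Finset.sum_congr rfl fun i _ => ?_
  rw [Finset.sum_comm]
  refine Finset.sum_congr rfl fun a _ => ?_
  rw [Finset.sum_comm]
  refine Finset.sum_congr rfl fun b _ => Finset.sum_congr rfl fun j _ => by ring

lemma sum_delta (c : Fin 8 → ℝ) (m : Fin 8) : (∑ b, c b * dR b m) = c m := by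
  simp [dR, mul_ite, Finset.sum_ite_eq']

lemma dR_symm (i j : Fin 8) : dR i j = dR j i := by unfold dR; simp [eq_comm]

lemma octe_apply (i j : Fin 8) : octe i j = dR j i := by
  unfold octe dR; simp [EuclideanSpace.single_apply]

lemma sum_dd (u v w : Oct) (m : Fin 8) :
    (∑ i, ∑ a, ∑ b, u i * v a * w b * (2 * dR i a * dR b m)) = 2 * (∑ i, u i * v i) * w m := by
  have h1 : ∀ i a : Fin 8, (∑ b, u i * v a * w b * (2 * dR i a * dR b m))
      = (2 * (u i * (v a * dR a i))) * w m := by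
    intro i a
    calc (∑ b, u i * v a * w b * (2 * dR i a * dR b m))
        = ∑ b, (u i * v a * (2 * dR i a)) * (w b * dR b m) :=
          Finset.sum_congr rfl fun b _ => by ring
      _ = (u i * v a * (2 * dR i a)) * ∑ b, w b * dR b m := (Finset.mul_sum _ _ _).symm
      _ = (2 * (u i * (v a * dR a i))) * w m := by rw [sum_delta, dR_symm]; ring
  calc (∑ i, ∑ a, ∑ b, u i * v a * w b * (2 * dR i a * dR b m))
      = ∑ i, ∑ a, (2 * (u i * (v a * dR a i))) * w m :=
        Finset.sum_congr rfl fun i _ => Finset.sum_congr rfl fun a _ => h1 i a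
    _ = ∑ i, (2 * (u i * v i)) * w m := by
        refine Finset.sum_congr rfl fun i _ => ?_
        calc (∑ a, (2 * (u i * (v a * dR a i))) * w m)
            = ∑ a, (2 * u i * w m) * (v a * dR a i) :=
              Finset.sum_congr rfl fun a _ => by ring
          _ = (2 * u i * w m) * ∑ a, v a * dR a i := (Finset.mul_sum _ _ _).symm
          _ = (2 * (u i * v i)) * w m := by rw [sum_delta]; ring
    _ = 2 * (∑ i, u i * v i) * w m := by
        rw [Finset.mul_sum, Finset.sum_mul]

lemma polar (u v w : Oct) :
    octMul u (octMul (octConj v) w) + octMul v (octMul (octConj u) w) = (2 * ⟪u, v⟫) • w := by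
  ext m
  rw [PiLp.add_apply, T_apply, T_apply, PiLp.smul_apply, smul_eq_mul, inner_oct]
  have h2 : (∑ i, ∑ a, ∑ b, v i * u a * w b * DR i a b m)
      = ∑ i, ∑ a, ∑ b, v a * u i * w b * DR a i b m := Finset.sum_comm
  rw [h2]
  simp only [← Finset.sum_add_distrib]
  calc (∑ i, ∑ a, ∑ b, (u i * v a * w b * DR i a b m + v a * u i * w b * DR a i b m))
      = ∑ i, ∑ a, ∑ b, u i * v a * w b * (2 * dR i a * dR b m) := by
        refine Finset.sum_congr rfl fun i _ => Finset.sum_congr rfl fun a _ =>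
          Finset.sum_congr rfl fun b _ => ?_
        rw [show u i * v a * w b * DR i a b m + v a * u i * w b * DR a i b m
            = u i * v a * w b * (DR i a b m + DR a i b m) by ring, idA_R]
    _ = 2 * (∑ i, u i * v i) * w m := sum_dd u v w m

lemma T_self (u w : Oct) : octMul u (octMul (octConj u) w) = ⟪u, u⟫ • w := by
  have h := polar u u w
  have h2 : (2:ℝ) • octMul u (octMul (octConj u) w) = (2:ℝ) • (⟪u, u⟫ • w) := by
    rw [two_smul, h, mul_smul]
  exact smul_right_injective Oct two_ne_zero h2

lemma conj_mul_self (v : Oct) : octMul (octConj v) v = ⟪v, v⟫ • octe 0 := by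
  ext j
  have rhs : (⟪v, v⟫ • octe 0) j = (∑ a, v a * v a) * dR j 0 := by
    rw [PiLp.smul_apply, smul_eq_mul, inner_oct, octe_apply]
  have key : (2:ℝ) * octMul (octConj v) v j = 2 * ((∑ a, v a * v a) * dR j 0) := by
    rw [octMul_apply]
    simp only [octConj_apply]
    have hsw : (∑ a, ∑ b, sR a * v a * v b * structC a b j)
        = ∑ a, ∑ b, sR b * v b * v a * structC b a j := Finset.sum_comm
    calc 2 * ∑ a, ∑ b, sR a * v a * v b * structC a b j
        = (∑ a, ∑ b, sR a * v a * v b * structC a b j)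
          + (∑ a, ∑ b, sR b * v b * v a * structC b a j) := by rw [← hsw]; ring
      _ = ∑ a, ∑ b, v a * v b * (2 * dR a b * dR j 0) := by
          simp only [← Finset.sum_add_distrib]
          refine Finset.sum_congr rfl fun a _ => Finset.sum_congr rfl fun b _ => ?_
          rw [show sR a * v a * v b * structC a b j + sR b * v b * v a * structC b a j
              = v a * v b * (sR a * structC a b j + sR b * structC b a j) by ring, idB_R]
      _ = ∑ a, v a * v a * (2 * dR j 0) := by
          refine Finset.sum_congr rfl fun a _ => ?_
          calc (∑ b, v a * v b * (2 * dR a b * dR j 0))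
              = ∑ b, (v a * (2 * dR j 0)) * (v b * dR b a) :=
                Finset.sum_congr rfl fun b _ => by rw [dR_symm a b]; ring
            _ = (v a * (2 * dR j 0)) * ∑ b, v b * dR b a := (Finset.mul_sum _ _ _).symm
            _ = v a * v a * (2 * dR j 0) := by rw [sum_delta]; ring
      _ = 2 * ((∑ a, v a * v a) * dR j 0) := by
          rw [Finset.sum_mul, Finset.mul_sum]
          exact Finset.sum_congr rfl fun a _ => by ring
  rw [rhs]
  exact mul_left_cancel₀ (two_ne_zero) key

lemma mul_e0 (u : Oct) : octMul u (octe 0) = u := by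
  ext k
  rw [octMul_apply]
  calc (∑ i, ∑ j, u i * octe 0 j * structC i j k)
      = ∑ i, ∑ j, (u i * structC i j k) * dR j 0 := by
        refine Finset.sum_congr rfl fun i _ => Finset.sum_congr rfl fun j _ => ?_
        rw [octe_apply]; ring
    _ = ∑ i, u i * structC i 0 k := by
        refine Finset.sum_congr rfl fun i _ => ?_
        exact sum_delta (fun j => u i * structC i j k) 0
    _ = ∑ i, u i * dR i k := by simp only [idE_R]
    _ = u k := sum_delta u k

lemma T_right_self (u v : Oct) : octMul u (octMul (octConj v) v) = ⟪v, v⟫ • u := by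
  rw [conj_mul_self]
  have : octMul u (⟪v, v⟫ • octe 0) = ⟪v, v⟫ • octMul u (octe 0) := by
    ext k
    rw [octMul_apply, PiLp.smul_apply, smul_eq_mul, octMul_apply, Finset.mul_sum]
    refine Finset.sum_congr rfl fun i _ => ?_
    rw [Finset.mul_sum]
    refine Finset.sum_congr rfl fun j _ => ?_
    rw [PiLp.smul_apply, smul_eq_mul]; ring
  rw [this, mul_e0]

lemma TI (u v w x : Oct) : ⟪octMul u (octMul (octConj v) w), x⟫
    = ∑ i, ∑ a, ∑ b, ∑ m, u i * v a * w b * x m * DR i a b m := by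
  rw [inner_oct]
  simp only [T_apply, Finset.sum_mul]
  rw [Finset.sum_comm]
  refine Finset.sum_congr rfl fun i _ => ?_
  rw [Finset.sum_comm]
  refine Finset.sum_congr rfl fun a _ => ?_
  rw [Finset.sum_comm]
  exact Finset.sum_congr rfl fun b _ => Finset.sum_congr rfl fun m _ => by ring

lemma sum_dd2 (p q r s : Fin 8 → ℝ) :
    (∑ i, ∑ a, ∑ b, ∑ m, p i * q a * r b * s m * (2 * dR i a * dR b m))
    = 2 * (∑ i, p i * q i) * (∑ b, r b * s b) := by
  have h1 : ∀ i a b : Fin 8, (∑ m, p i * q a * r b * s m * (2 * dR i a * dR b m))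
      = (p i * q a * (2 * dR i a)) * (r b * s b) := by
    intro i a b
    calc (∑ m, p i * q a * r b * s m * (2 * dR i a * dR b m))
        = ∑ m, (p i * q a * (2 * dR i a) * r b) * (s m * dR m b) :=
          Finset.sum_congr rfl fun m _ => by rw [dR_symm b m]; ring
      _ = (p i * q a * (2 * dR i a) * r b) * ∑ m, s m * dR m b := (Finset.mul_sum _ _ _).symm
      _ = (p i * q a * (2 * dR i a)) * (r b * s b) := by rw [sum_delta]; ring
  have h2 : ∀ i a : Fin 8, (∑ b, ∑ m, p i * q a * r b * s m * (2 * dR i a * dR b m))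
      = (p i * q a * (2 * dR i a)) * (∑ b, r b * s b) := by
    intro i a
    rw [Finset.mul_sum]
    exact Finset.sum_congr rfl fun b _ => h1 i a b
  calc (∑ i, ∑ a, ∑ b, ∑ m, p i * q a * r b * s m * (2 * dR i a * dR b m))
      = ∑ i, ∑ a, (p i * q a * (2 * dR i a)) * (∑ b, r b * s b) :=
        Finset.sum_congr rfl fun i _ => Finset.sum_congr rfl fun a _ => h2 i a
    _ = ∑ i, (2 * (∑ b, r b * s b)) * (p i * q i) := by
        refine Finset.sum_congr rfl fun i _ => ?_
        calc (∑ a, (p i * q a * (2 * dR i a)) * (∑ b, r b * s b))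
            = ∑ a, (p i * 2 * (∑ b, r b * s b)) * (q a * dR a i) :=
              Finset.sum_congr rfl fun a _ => by rw [dR_symm i a]; ring
          _ = (p i * 2 * (∑ b, r b * s b)) * ∑ a, q a * dR a i := (Finset.mul_sum _ _ _).symm
          _ = (2 * (∑ b, r b * s b)) * (p i * q i) := by rw [sum_delta]; ring
    _ = (2 * (∑ b, r b * s b)) * (∑ i, p i * q i) := (Finset.mul_sum _ _ _).symm
    _ = 2 * (∑ i, p i * q i) * (∑ b, r b * s b) := by ring

lemma swap14 (f : Fin 8 → Fin 8 → Fin 8 → Fin 8 → ℝ) :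
    (∑ i, ∑ a, ∑ b, ∑ m, f i a b m) = ∑ i, ∑ a, ∑ b, ∑ m, f m a b i := by
  calc (∑ i, ∑ a, ∑ b, ∑ m, f i a b m)
      = ∑ a, ∑ i, ∑ b, ∑ m, f i a b m := Finset.sum_comm
    _ = ∑ a, ∑ b, ∑ i, ∑ m, f i a b m := Finset.sum_congr rfl fun a _ => Finset.sum_comm
    _ = ∑ a, ∑ b, ∑ m, ∑ i, f i a b m := Finset.sum_congr rfl fun a _ =>
        Finset.sum_congr rfl fun b _ => Finset.sum_comm
    _ = ∑ a, ∑ m, ∑ b, ∑ i, f i a b m := Finset.sum_congr rfl fun a _ => Finset.sum_comm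
    _ = ∑ m, ∑ a, ∑ b, ∑ i, f i a b m := Finset.sum_comm

lemma swap24 (f : Fin 8 → Fin 8 → Fin 8 → Fin 8 → ℝ) :
    (∑ i, ∑ a, ∑ b, ∑ m, f i a b m) = ∑ i, ∑ a, ∑ b, ∑ m, f i m b a := by
  refine Finset.sum_congr rfl fun i _ => ?_
  calc (∑ a, ∑ b, ∑ m, f i a b m)
      = ∑ b, ∑ a, ∑ m, f i a b m := Finset.sum_comm
    _ = ∑ b, ∑ m, ∑ a, f i a b m := Finset.sum_congr rfl fun b _ => Finset.sum_comm
    _ = ∑ m, ∑ b, ∑ a, f i a b m := Finset.sum_comm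

lemma P4 (u v w : Oct) : ⟪octMul u (octMul (octConj v) w), w⟫ = ⟪u, v⟫ * ⟪w, w⟫ := by
  have key : (2:ℝ) * ⟪octMul u (octMul (octConj v) w), w⟫
      = 2 * ((∑ i, u i * v i) * (∑ b, w b * w b)) := by
    rw [TI]
    have hsw : (∑ i, ∑ a, ∑ b, ∑ m, u i * v a * w b * w m * DR i a b m)
        = ∑ i, ∑ a, ∑ b, ∑ m, u i * v a * w m * w b * DR i a m b :=
      Finset.sum_congr rfl fun i _ => Finset.sum_congr rfl fun a _ => Finset.sum_comm
    calc (2:ℝ) * ∑ i, ∑ a, ∑ b, ∑ m, u i * v a * w b * w m * DR i a b m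
        = (∑ i, ∑ a, ∑ b, ∑ m, u i * v a * w b * w m * DR i a b m)
          + ∑ i, ∑ a, ∑ b, ∑ m, u i * v a * w m * w b * DR i a m b := by rw [← hsw]; ring
      _ = ∑ i, ∑ a, ∑ b, ∑ m, u i * v a * w b * w m * (2 * dR i a * dR b m) := by
          simp only [← Finset.sum_add_distrib]
          refine Finset.sum_congr rfl fun i _ => Finset.sum_congr rfl fun a _ =>
            Finset.sum_congr rfl fun b _ => Finset.sum_congr rfl fun m _ => ?_
          rw [show u i * v a * w b * w m * DR i a b m + u i * v a * w m * w b * DR i a m b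
              = u i * v a * w b * w m * (DR i a b m + DR i a m b) by ring, idW_R]
      _ = 2 * (∑ i, u i * v i) * (∑ b, w b * w b) := sum_dd2 u v w w
      _ = 2 * ((∑ i, u i * v i) * (∑ b, w b * w b)) := by ring
  have h := mul_left_cancel₀ (two_ne_zero (α := ℝ)) key
  rw [h, inner_oct, inner_oct]

lemma P5 (u v w : Oct) : ⟪octMul u (octMul (octConj v) w), u⟫ = ⟪v, w⟫ * ⟪u, u⟫ := by
  have key : (2:ℝ) * ⟪octMul u (octMul (octConj v) w), u⟫
      = 2 * ((∑ i, v i * w i) * (∑ b, u b * u b)) := by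
    rw [TI]
    have hsw : (∑ i, ∑ a, ∑ b, ∑ m, u i * v a * w b * u m * DR i a b m)
        = ∑ i, ∑ a, ∑ b, ∑ m, u m * v a * w b * u i * DR m a b i :=
      swap14 (fun i a b m => u i * v a * w b * u m * DR i a b m)
    calc (2:ℝ) * ∑ i, ∑ a, ∑ b, ∑ m, u i * v a * w b * u m * DR i a b m
        = (∑ i, ∑ a, ∑ b, ∑ m, u i * v a * w b * u m * DR i a b m)
          + ∑ i, ∑ a, ∑ b, ∑ m, u m * v a * w b * u i * DR m a b i := by rw [← hsw]; ring
      _ = ∑ i, ∑ a, ∑ b, ∑ m, u i * v a * w b * u m * (2 * dR a b * dR i m) := by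
          simp only [← Finset.sum_add_distrib]
          refine Finset.sum_congr rfl fun i _ => Finset.sum_congr rfl fun a _ =>
            Finset.sum_congr rfl fun b _ => Finset.sum_congr rfl fun m _ => ?_
          rw [show u i * v a * w b * u m * DR i a b m + u m * v a * w b * u i * DR m a b i
              = u i * v a * w b * u m * (DR i a b m + DR m a b i) by ring, idU_R]
      _ = ∑ a, ∑ b, ∑ i, ∑ m, v a * w b * u i * u m * (2 * dR a b * dR i m) := by
          rw [Finset.sum_comm]
          refine Finset.sum_congr rfl fun a _ => ?_
          rw [Finset.sum_comm]
          exact Finset.sum_congr rfl fun b _ => Finset.sum_congr rfl fun i _ =>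
            Finset.sum_congr rfl fun m _ => by ring
      _ = 2 * (∑ a, v a * w a) * (∑ b, u b * u b) := sum_dd2 v w u u
      _ = 2 * ((∑ i, v i * w i) * (∑ b, u b * u b)) := by ring
  have h := mul_left_cancel₀ (two_ne_zero (α := ℝ)) key
  rw [h, inner_oct, inner_oct]

lemma P6 (u v w : Oct) : ⟪octMul u (octMul (octConj v) w), v⟫
    = ⟪u, v⟫ * ⟪w, v⟫ + ⟪v, w⟫ * ⟪u, v⟫ - ⟪w, u⟫ * ⟪v, v⟫ := by
  have key : (2:ℝ) * ⟪octMul u (octMul (octConj v) w), v⟫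
      = 2 * ((∑ i, u i * v i) * (∑ b, w b * v b) + (∑ i, v i * w i) * (∑ b, u b * v b)
        - (∑ i, u i * w i) * (∑ b, v b * v b)) := by
    rw [TI]
    have hsw : (∑ i, ∑ a, ∑ b, ∑ m, u i * v a * w b * v m * DR i a b m)
        = ∑ i, ∑ a, ∑ b, ∑ m, u i * v m * w b * v a * DR i m b a :=
      swap24 (fun i a b m => u i * v a * w b * v m * DR i a b m)
    calc (2:ℝ) * ∑ i, ∑ a, ∑ b, ∑ m, u i * v a * w b * v m * DR i a b m
        = (∑ i, ∑ a, ∑ b, ∑ m, u i * v a * w b * v m * DR i a b m)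
          + ∑ i, ∑ a, ∑ b, ∑ m, u i * v m * w b * v a * DR i m b a := by rw [← hsw]; ring
      _ = ∑ i, ∑ a, ∑ b, ∑ m, (u i * v a * w b * v m * (2 * dR i a * dR b m)
            + v a * w b * u i * v m * (2 * dR a b * dR i m)
            - u i * w b * v a * v m * (2 * dR i b * dR a m)) := by
          simp only [← Finset.sum_add_distrib]
          refine Finset.sum_congr rfl fun i _ => Finset.sum_congr rfl fun a _ =>
            Finset.sum_congr rfl fun b _ => Finset.sum_congr rfl fun m _ => ?_
          rw [show u i * v a * w b * v m * DR i a b m + u i * v m * w b * v a * DR i m b a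
              = u i * v a * w b * v m * (DR i a b m + DR i m b a) by ring, idV_R,
              dR_symm b i]
          ring
      _ = (∑ i, ∑ a, ∑ b, ∑ m, u i * v a * w b * v m * (2 * dR i a * dR b m))
          + (∑ i, ∑ a, ∑ b, ∑ m, v a * w b * u i * v m * (2 * dR a b * dR i m))
          - ∑ i, ∑ a, ∑ b, ∑ m, u i * w b * v a * v m * (2 * dR i b * dR a m) := by
          simp only [Finset.sum_add_distrib, Finset.sum_sub_distrib]
      _ = 2 * ((∑ i, u i * v i) * (∑ b, w b * v b) + (∑ i, v i * w i) * (∑ b, u b * v b)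
          - (∑ i, u i * w i) * (∑ b, v b * v b)) := by
          rw [sum_dd2 u v w v]
          rw [show (∑ i, ∑ a, ∑ b, ∑ m, v a * w b * u i * v m * (2 * dR a b * dR i m))
              = ∑ a, ∑ b, ∑ i, ∑ m, v a * w b * u i * v m * (2 * dR a b * dR i m) from by
            rw [Finset.sum_comm]
            refine Finset.sum_congr rfl fun a _ => ?_
            rw [Finset.sum_comm]]
          rw [sum_dd2 v w u v]
          rw [show (∑ i, ∑ a, ∑ b, ∑ m, u i * w b * v a * v m * (2 * dR i b * dR a m))
              = ∑ i, ∑ b, ∑ a, ∑ m, u i * w b * v a * v m * (2 * dR i b * dR a m) from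
            Finset.sum_congr rfl fun i _ => Finset.sum_comm]
          rw [sum_dd2 u w v v]
          ring
  have h := mul_left_cancel₀ (two_ne_zero (α := ℝ)) key
  rw [real_inner_comm u w, h]
  simp only [inner_oct]


lemma MI (x y : Oct) : ⟪octMul x y, octMul x y⟫
    = ∑ i, ∑ j, ∑ a, ∑ b, x i * y j * x a * y b * (∑ k, structC i j k * structC a b k) := by
  rw [inner_oct]
  simp only [octMul_apply, Finset.sum_mul, Finset.mul_sum]
  rw [Finset.sum_comm]
  refine Finset.sum_congr rfl fun i _ => ?_
  rw [Finset.sum_comm]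
  refine Finset.sum_congr rfl fun j _ => ?_
  rw [Finset.sum_comm]
  refine Finset.sum_congr rfl fun a _ => ?_
  rw [Finset.sum_comm]
  refine Finset.sum_congr rfl fun b _ => ?_
  exact Finset.sum_congr rfl fun k _ => by ring

lemma P7 (x y : Oct) : ⟪octMul x y, octMul x y⟫ = ⟪x, x⟫ * ⟪y, y⟫ := by
  have key : (2:ℝ) * ⟪octMul x y, octMul x y⟫
      = 2 * ((∑ i, x i * x i) * (∑ j, y j * y j)) := by
    rw [MI]
    have hsw : (∑ i, ∑ j, ∑ a, ∑ b, x i * y j * x a * y b * (∑ k, structC i j k * structC a b k))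
        = ∑ i, ∑ j, ∑ a, ∑ b, x i * y b * x a * y j * (∑ k, structC i b k * structC a j k) :=
      swap24 (fun i j a b => x i * y j * x a * y b * (∑ k, structC i j k * structC a b k))
    calc (2:ℝ) * ∑ i, ∑ j, ∑ a, ∑ b, x i * y j * x a * y b * (∑ k, structC i j k * structC a b k)
        = (∑ i, ∑ j, ∑ a, ∑ b, x i * y j * x a * y b * (∑ k, structC i j k * structC a b k))
          + ∑ i, ∑ j, ∑ a, ∑ b, x i * y b * x a * y j * (∑ k, structC i b k * structC a j k) := by
          rw [← hsw]; ring
      _ = ∑ i, ∑ j, ∑ a, ∑ b, x i * y j * x a * y b * (2 * dR i a * dR j b) := by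
          simp only [← Finset.sum_add_distrib]
          refine Finset.sum_congr rfl fun i _ => Finset.sum_congr rfl fun j _ =>
            Finset.sum_congr rfl fun a _ => Finset.sum_congr rfl fun b _ => ?_
          rw [show x i * y j * x a * y b * (∑ k, structC i j k * structC a b k)
              + x i * y b * x a * y j * (∑ k, structC i b k * structC a j k)
              = x i * y j * x a * y b * ((∑ k, structC i j k * structC a b k)
                + ∑ k, structC i b k * structC a j k) by ring, idN_R]
      _ = ∑ i, ∑ a, ∑ j, ∑ b, x i * x a * y j * y b * (2 * dR i a * dR j b) := by
          refine Finset.sum_congr rfl fun i _ => ?_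
          rw [Finset.sum_comm]
          exact Finset.sum_congr rfl fun a _ => Finset.sum_congr rfl fun j _ =>
            Finset.sum_congr rfl fun b _ => by ring
      _ = 2 * (∑ i, x i * x i) * (∑ j, y j * y j) := sum_dd2 x x y y
      _ = 2 * ((∑ i, x i * x i) * (∑ j, y j * y j)) := by ring
  have h := mul_left_cancel₀ (two_ne_zero (α := ℝ)) key
  rw [h, inner_oct, inner_oct]

lemma P8 (v : Oct) : ⟪octConj v, octConj v⟫ = ⟪v, v⟫ := by
  rw [inner_oct, inner_oct]
  refine Finset.sum_congr rfl fun k _ => ?_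
  rw [octConj_apply]
  unfold sR; split_ifs <;> ring

lemma octMul_add_left (x y z : Oct) : octMul (x + y) z = octMul x z + octMul y z := by
  ext k
  rw [PiLp.add_apply, octMul_apply, octMul_apply, octMul_apply, ← Finset.sum_add_distrib]
  refine Finset.sum_congr rfl fun i _ => ?_
  rw [← Finset.sum_add_distrib]
  refine Finset.sum_congr rfl fun j _ => ?_
  rw [PiLp.add_apply]; ring

lemma octMul_add_right (x y z : Oct) : octMul x (y + z) = octMul x y + octMul x z := by
  ext k
  rw [PiLp.add_apply, octMul_apply, octMul_apply, octMul_apply, ← Finset.sum_add_distrib]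
  refine Finset.sum_congr rfl fun i _ => ?_
  rw [← Finset.sum_add_distrib]
  refine Finset.sum_congr rfl fun j _ => ?_
  rw [PiLp.add_apply]; ring

lemma octMul_smul_left (r : ℝ) (x z : Oct) : octMul (r • x) z = r • octMul x z := by
  ext k
  rw [PiLp.smul_apply, smul_eq_mul, octMul_apply, octMul_apply, Finset.mul_sum]
  refine Finset.sum_congr rfl fun i _ => ?_
  rw [Finset.mul_sum]
  refine Finset.sum_congr rfl fun j _ => ?_
  rw [PiLp.smul_apply, smul_eq_mul]; ring

lemma octMul_smul_right (r : ℝ) (x z : Oct) : octMul x (r • z) = r • octMul x z := by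
  ext k
  rw [PiLp.smul_apply, smul_eq_mul, octMul_apply, octMul_apply, Finset.mul_sum]
  refine Finset.sum_congr rfl fun i _ => ?_
  rw [Finset.mul_sum]
  refine Finset.sum_congr rfl fun j _ => ?_
  rw [PiLp.smul_apply, smul_eq_mul]; ring

lemma octConj_add (x y : Oct) : octConj (x + y) = octConj x + octConj y := by
  ext a
  rw [PiLp.add_apply, octConj_apply, octConj_apply, octConj_apply, PiLp.add_apply]; ring

lemma octConj_smul (r : ℝ) (x : Oct) : octConj (r • x) = r • octConj x := by
  ext a
  rw [PiLp.smul_apply, smul_eq_mul, octConj_apply, octConj_apply, PiLp.smul_apply, smul_eq_mul]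
  ring

lemma X3_add1 (x y v w : Oct) : X3 (x + y) v w = X3 x v w + X3 y v w := by
  unfold X3
  rw [octMul_add_left, inner_add_left, inner_add_right]
  module


lemma X3_add2 (u x y w : Oct) : X3 u (x + y) w = X3 u x w + X3 u y w := by
  unfold X3
  rw [octConj_add, octMul_add_left, octMul_add_right, inner_add_right, inner_add_left]
  module


lemma X3_add3 (u v x y : Oct) : X3 u v (x + y) = X3 u v x + X3 u v y := by
  unfold X3
  rw [octMul_add_right, octMul_add_right, inner_add_right, inner_add_left]
  module


lemma X3_smul1 (r : ℝ) (x v w : Oct) : X3 (r • x) v w = r • X3 x v w := by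
  unfold X3
  rw [octMul_smul_left, real_inner_smul_left, real_inner_smul_right]
  module


lemma X3_smul2 (r : ℝ) (u x w : Oct) : X3 u (r • x) w = r • X3 u x w := by
  unfold X3
  rw [octConj_smul, octMul_smul_left, octMul_smul_right, real_inner_smul_right,
    real_inner_smul_left]
  module


lemma X3_smul3 (r : ℝ) (u v x : Oct) : X3 u v (r • x) = r • X3 u v x := by
  unfold X3
  rw [octMul_smul_right, octMul_smul_right, real_inner_smul_right, real_inner_smul_left]
  module


lemma X3_uu (u w : Oct) : X3 u u w = 0 := by
  unfold X3
  rw [T_self, real_inner_comm w u]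
  module


lemma X3_vv (u v : Oct) : X3 u v v = 0 := by
  unfold X3
  rw [T_right_self, real_inner_comm v u]
  module


lemma X3_swap23 (u v w : Oct) : X3 u v w = -X3 u w v := by
  have h := X3_vv u (v + w)
  rw [X3_add2, X3_add3, X3_add3, X3_vv, X3_vv] at h
  refine eq_neg_of_add_eq_zero_left ?_
  calc X3 u v w + X3 u w v = 0 + X3 u v w + (X3 u w v + 0) := by abel
    _ = 0 := h

lemma X3_uvu (u v : Oct) : X3 u v u = 0 := by rw [X3_swap23, X3_uu, neg_zero]

def X3A : Oct [⋀^Fin 3]→ₗ[ℝ] Oct where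
  toFun v := X3 (v 0) (v 1) (v 2)
  map_update_add' := by
    intro dec m i x y
    have hdec : dec = instDecidableEqFin 3 := Subsingleton.elim _ _
    subst hdec
    fin_cases i <;>
      simp [Function.update_apply, X3_add1, X3_add2, X3_add3]
  map_update_smul' := by
    intro dec m i c x
    have hdec : dec = instDecidableEqFin 3 := Subsingleton.elim _ _
    subst hdec
    fin_cases i <;>
      simp [Function.update_apply, X3_smul1, X3_smul2, X3_smul3]
  map_eq_zero_of_eq' := by
    intro v i j hv hij
    show X3 (v 0) (v 1) (v 2) = 0
    fin_cases i <;> fin_cases j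
    · exact absurd rfl hij
    · rw [show v 0 = v 1 from hv]; exact X3_uu _ _
    · rw [show v 0 = v 2 from hv]; exact X3_uvu _ _
    · rw [← show v 1 = v 0 from hv]; exact X3_uu _ _
    · exact absurd rfl hij
    · rw [show v 1 = v 2 from hv]; exact X3_vv _ _
    · rw [show v 2 = v 0 from hv]; exact X3_uvu _ _
    · rw [show v 2 = v 1 from hv]; exact X3_vv _ _
    · exact absurd rfl hij

lemma alt_det (F : Oct [⋀^Fin 3]→ₗ[ℝ] Oct) (g : Matrix (Fin 3) (Fin 3) ℝ) (v : Fin 3 → Oct) :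
    F (fun i => ∑ j, g i j • v j) = g.det • F v := by
  classical
  have h1 : F (fun i => ∑ j, g i j • v j)
      = ∑ r : Fin 3 → Fin 3, F (fun i => g i (r i) • v (r i)) :=
    F.toMultilinearMap.map_sum (g := fun i j => g i j • v j)
  have h2 : ∀ r : Fin 3 → Fin 3, F (fun i => g i (r i) • v (r i))
      = (∏ i, g i (r i)) • F (v ∘ r) := fun r =>
    F.toMultilinearMap.map_smul_univ (fun i => g i (r i)) (fun i => v (r i))
  rw [h1, Finset.sum_congr rfl fun r _ => h2 r]
  have hzero : ∀ r : Fin 3 → Fin 3, ¬ Function.Bijective r → F (v ∘ r) = 0 := by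
    intro r hr
    have hni : ¬ Function.Injective r := fun hinj =>
      hr (Finite.injective_iff_bijective.1 hinj)
    rw [Function.not_injective_iff] at hni
    obtain ⟨a, b, hab, hne⟩ := hni
    exact F.map_eq_zero_of_eq _ (congrArg v hab : (v ∘ r) a = (v ∘ r) b) hne
  have hsub : (∑ r : Fin 3 → Fin 3, (∏ i, g i (r i)) • F (v ∘ r))
      = ∑ r ∈ Finset.univ.filter (fun r : Fin 3 → Fin 3 => Function.Bijective r),
          (∏ i, g i (r i)) • F (v ∘ r) := by
    refine (Finset.sum_filter_of_ne ?_).symm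
    intro r _ hne
    by_contra hb
    exact hne (by rw [hzero r hb, smul_zero])
  rw [hsub]
  have hperm : (∑ r ∈ Finset.univ.filter (fun r : Fin 3 → Fin 3 => Function.Bijective r),
          (∏ i, g i (r i)) • F (v ∘ r))
      = ∑ σ : Equiv.Perm (Fin 3), (∏ i, g i (σ i)) • F (v ∘ σ) := by
    refine Finset.sum_bij' (fun r hr => Equiv.ofBijective r (by simpa using hr))
      (fun σ _ => ⇑σ) ?_ ?_ ?_ ?_ ?_
    · intro r hr; exact Finset.mem_univ _
    · intro σ _; exact Finset.mem_filter.2 ⟨Finset.mem_univ _, σ.bijective⟩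
    · intro r hr; rfl
    · intro σ _; exact Equiv.ext fun x => rfl
    · intro r hr; rfl
  rw [hperm]
  have hsign : ∀ σ : Equiv.Perm (Fin 3), F (v ∘ σ) = Equiv.Perm.sign σ • F v :=
    fun σ => F.map_perm v σ
  have hdet2 : g.det = ∑ σ : Equiv.Perm (Fin 3),
      ((Equiv.Perm.sign σ : ℤ) : ℝ) * ∏ i, g i (σ i) := by
    conv_lhs => rw [← Matrix.det_transpose g]
    rw [Matrix.det_apply']
    exact Finset.sum_congr rfl fun σ _ => by
      rw [show (∏ i, g.transpose (σ i) i) = ∏ i, g i (σ i) from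
        Finset.prod_congr rfl fun i _ => rfl]
  rw [hdet2, Finset.sum_smul]
  refine Finset.sum_congr rfl fun σ _ => ?_
  rw [hsign σ, Units.smul_def, ← Int.cast_smul_eq_zsmul ℝ, smul_smul, mul_comm]
/-- `σ₃(u∧v∧w) = X(u,v,w)` is well defined on oriented 3-planes of ℝ⁸
(positively oriented orthonormal bases differ by an element of SO(3)) and
gives a unit vector orthogonal to the plane. -/
theorem stmt7 (f : Fin 3 → Oct)
    (horth : ∀ i j : Fin 3, ⟪f i, f j⟫ = if i = j then 1 else 0)
    (g : Matrix (Fin 3) (Fin 3) ℝ) (hg : g.transpose * g = 1) (hdet : g.det = 1)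
    (f' : Fin 3 → Oct) (hf' : ∀ i, f' i = ∑ j, g i j • f j) :
    X3 (f' 0) (f' 1) (f' 2) = X3 (f 0) (f 1) (f 2) ∧
    ‖X3 (f 0) (f 1) (f 2)‖ = 1 ∧
    ∀ m : Fin 3, ⟪X3 (f 0) (f 1) (f 2), f m⟫ = 0 := by
  have hX : ∀ h : Fin 3 → Oct, X3A h = X3 (h 0) (h 1) (h 2) := fun _ => rfl
  have h00 : ⟪f 0, f 0⟫ = 1 := by simpa using horth 0 0
  have h11 : ⟪f 1, f 1⟫ = 1 := by simpa using horth 1 1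
  have h22 : ⟪f 2, f 2⟫ = 1 := by simpa using horth 2 2
  have h01 : ⟪f 0, f 1⟫ = 0 := by simpa using horth 0 1
  have h12 : ⟪f 1, f 2⟫ = 0 := by simpa using horth 1 2
  have h20 : ⟪f 2, f 0⟫ = 0 := by simpa using horth 2 0
  have h21 : ⟪f 2, f 1⟫ = 0 := by simpa using horth 2 1
  have hXf : X3 (f 0) (f 1) (f 2) = -octMul (f 0) (octMul (octConj (f 1)) (f 2)) := by
    unfold X3
    rw [h01, h12, h20, zero_smul, zero_smul, zero_smul, add_zero, add_zero, sub_zero]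
  refine ⟨?_, ?_, ?_⟩
  · have hf'eq : f' = fun i => ∑ j, g i j • f j := funext hf'
    calc X3 (f' 0) (f' 1) (f' 2) = X3A f' := (hX f').symm
      _ = Matrix.det g • X3A f := by rw [hf'eq, alt_det]
      _ = X3 (f 0) (f 1) (f 2) := by rw [hdet, one_smul, hX]
  · rw [hXf, norm_neg]
    set T := octMul (f 0) (octMul (octConj (f 1)) (f 2)) with hT
    have hTT : ⟪T, T⟫ = 1 := by
      rw [hT, P7, P7, P8, h00, h11, h22]; norm_num
    have hn : ‖T‖ ^ 2 = 1 := by rw [← real_inner_self_eq_norm_sq, hTT]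
    nlinarith [norm_nonneg T]
  · have o0 : ⟪X3 (f 0) (f 1) (f 2), f 0⟫ = 0 := by
      rw [hXf, inner_neg_left, P5, h12]; ring
    have o1 : ⟪X3 (f 0) (f 1) (f 2), f 1⟫ = 0 := by
      rw [hXf, inner_neg_left, P6, h01, h12, h20, h11, h21]; ring
    have o2 : ⟪X3 (f 0) (f 1) (f 2), f 2⟫ = 0 := by
      rw [hXf, inner_neg_left, P4, h01]; ring
    intro m
    fin_cases m
    exacts [o0, o1, o2]
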